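/- Let L > 0, α ∈ ℝ, r > 0, let m : [0,L] → ℝ be continuous, let K ∈ L^∞((0,L)×(0,L)), and let u ∈ C²([0,L]) satisfy u(x) > 0 on [0,L], u'(0) = u'(L) = 0 and (e^{αx}u'(x))' + r e^{αx} u(x)(m(x) − ∫₀ᴸ K(x,y) e^{αy} u(y) dy) = 0 on (0,L). Suppose μ ∈ ℂ with Re μ ≥ 0, τ ≥ 0, and ψ ∈ C²([0,L],ℂ) is not identically zero, with ψ'(0) = ψ'(L) = 0, and satisfies (e^{αx}ψ'(x))' + r e^{αx}(m(x) − ∫₀ᴸ K(x,y) e^{αy} u(y) dy)ψ(x) − r e^{αx} u(x) (∫₀ᴸ K(x,y) e^{αy} ψ(y) dy) e^{−μτ} = μ e^{αx} ψ(x) for all x ∈ (0,L). Then 0 ≤ Re(μ)/r ≤ e^{2|α|L} L ‖u‖_∞ ‖K‖_{L^∞} and |Im(μ)|/r ≤ e^{2|α|L} L ‖u‖_∞ ‖K‖_{L^∞}; in particular |μ/r| is bounded by √2 · e^{2|α|L} L ‖u‖_∞ ‖K‖_{L^∞}. -/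

import Mathlib

open MeasureTheory

/-- The characteristic (eigenvalue) equation `Δ(r,μ,τ)ψ = 0` of the linearization at a
steady state `u`, in pointwise form on `(0,L)`. -/
def CharEq (L α r : ℝ) (m : ℝ → ℝ) (K : ℝ → ℝ → ℝ) (u : ℝ → ℝ)
    (μ : ℂ) (τ : ℝ) (ψ : ℝ → ℂ) : Prop :=
  ∀ x ∈ Set.Ioo 0 L,
    derivWithin (fun t => (Real.exp (α * t) : ℂ) * derivWithin ψ (Set.Icc 0 L) t)
        (Set.Icc 0 L) x
      + (r : ℂ) * (Real.exp (α * x) : ℂ) *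
          ((m x : ℂ) - Complex.ofReal (∫ y in (0:ℝ)..L, K x y * Real.exp (α * y) * u y)) * ψ x
      - (r : ℂ) * (Real.exp (α * x) : ℂ) * (u x : ℂ) *
          (∫ y in (0:ℝ)..L, (Complex.ofReal (K x y * Real.exp (α * y))) * ψ y) *
          Complex.exp (-μ * (τ : ℂ))
      = μ * (Real.exp (α * x) : ℂ) * ψ x

open Set Topology

noncomputable section


variable (L α : ℝ) (u : ℝ → ℝ) (ψ : ℝ → ℂ)

/-- second-order operator pieces -/
def psid (L : ℝ) (ψ : ℝ → ℂ) : ℝ → ℂ := derivWithin ψ (Icc 0 L)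
def ud' (L : ℝ) (u : ℝ → ℝ) : ℝ → ℝ := derivWithin u (Icc 0 L)
def Lpsi (L α : ℝ) (ψ : ℝ → ℂ) : ℝ → ℂ :=
  derivWithin (fun t => (Real.exp (α * t) : ℂ) * derivWithin ψ (Icc 0 L) t) (Icc 0 L)
def Lu' (L α : ℝ) (u : ℝ → ℝ) : ℝ → ℝ :=
  derivWithin (fun t => Real.exp (α * t) * derivWithin u (Icc 0 L) t) (Icc 0 L)

def Wfun (L α : ℝ) (u : ℝ → ℝ) (ψ : ℝ → ℂ) : ℝ → ℂ := fun t =>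
  (Real.exp (α * t) : ℂ) * derivWithin ψ (Icc 0 L) t * (starRingEnd ℂ) (ψ t)
    - ((Real.exp (α * t) * derivWithin u (Icc 0 L) t : ℝ) : ℂ) *
        (ψ t * (starRingEnd ℂ) (ψ t)) / (u t : ℂ)

def Efun (L α : ℝ) (u : ℝ → ℝ) (ψ : ℝ → ℂ) : ℝ → ℂ := fun x =>
  Lpsi L α ψ x * (starRingEnd ℂ) (ψ x)
    - (Lu' L α u x : ℂ) * (ψ x * (starRingEnd ℂ) (ψ x)) / (u x : ℂ)
    + (Real.exp (α * x) : ℂ) *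
        (((u x : ℂ) * psid L ψ x - (ud' L u x : ℂ) * ψ x) *
          (starRingEnd ℂ) ((u x : ℂ) * psid L ψ x - (ud' L u x : ℂ) * ψ x)) / (u x : ℂ) ^ 2

theorem keyDeriv (hL : 0 < L)
    (hu : ContDiffOn ℝ 2 u (Icc 0 L)) (hψ : ContDiffOn ℝ 2 ψ (Icc 0 L))
    (x : ℝ) (hx : x ∈ Ioo 0 L) (hux : u x ≠ 0) :
    HasDerivAt (Wfun L α u ψ) (Efun L α u ψ x) x := by
  have hud : UniqueDiffOn ℝ (Icc (0:ℝ) L) := uniqueDiffOn_Icc hL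
  have hxI : x ∈ Icc (0:ℝ) L := Ioo_subset_Icc_self hx
  have hIcc : Icc (0:ℝ) L ∈ 𝓝 x := Icc_mem_nhds hx.1 hx.2
  have hexp : ContDiff ℝ 1 (fun t : ℝ => ((Real.exp (α * t) : ℝ) : ℂ)) :=
    Complex.ofRealCLM.contDiff.comp ((Real.contDiff_exp.of_le le_top).comp
      (contDiff_const.mul contDiff_id))
  have hexpR : ContDiff ℝ 1 (fun t : ℝ => Real.exp (α * t)) :=
    (Real.contDiff_exp.of_le le_top).comp (contDiff_const.mul contDiff_id)
  have hψ1 : ContDiffOn ℝ 1 (derivWithin ψ (Icc 0 L)) (Icc 0 L) :=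
    hψ.derivWithin hud (by norm_num)
  have hu1 : ContDiffOn ℝ 1 (derivWithin u (Icc 0 L)) (Icc 0 L) :=
    hu.derivWithin hud (by norm_num)
  have hAψ1 : ContDiffOn ℝ 1 (fun t => (Real.exp (α * t) : ℂ) * derivWithin ψ (Icc 0 L) t)
      (Icc 0 L) := (hexp.contDiffOn).mul hψ1
  have hAu1 : ContDiffOn ℝ 1 (fun t => Real.exp (α * t) * derivWithin u (Icc 0 L) t)
      (Icc 0 L) := (hexpR.contDiffOn).mul hu1
  have hψx : HasDerivAt ψ (psid L ψ x) x :=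
    (((hψ.differentiableOn (by norm_num)) x hxI).hasDerivWithinAt).hasDerivAt hIcc
  have hux' : HasDerivAt u (ud' L u x) x :=
    (((hu.differentiableOn (by norm_num)) x hxI).hasDerivWithinAt).hasDerivAt hIcc
  have hAψ : HasDerivAt (fun t => (Real.exp (α * t) : ℂ) * derivWithin ψ (Icc 0 L) t)
      (Lpsi L α ψ x) x :=
    (((hAψ1.differentiableOn one_ne_zero) x hxI).hasDerivWithinAt).hasDerivAt hIcc
  have hAu : HasDerivAt (fun t => Real.exp (α * t) * derivWithin u (Icc 0 L) t)
      (Lu' L α u x) x :=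
    (((hAu1.differentiableOn one_ne_zero) x hxI).hasDerivWithinAt).hasDerivAt hIcc
  have hconj : HasDerivAt (fun t => (starRingEnd ℂ) (ψ t)) ((starRingEnd ℂ) (psid L ψ x)) x :=
    hψx.star
  have hucoe : HasDerivAt (fun t => ((u t : ℝ) : ℂ)) ((ud' L u x : ℝ) : ℂ) x :=
    hux'.ofReal_comp
  have hAucoe : HasDerivAt (fun t => ((Real.exp (α * t) * derivWithin u (Icc 0 L) t : ℝ) : ℂ))
      ((Lu' L α u x : ℝ) : ℂ) x := hAu.ofReal_comp
  have huxc : (u x : ℂ) ≠ 0 := by exact_mod_cast hux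
  have H := (hAψ.mul hconj).sub ((hAucoe.mul (hψx.mul hconj)).div hucoe huxc)
  convert H using 1
  · rfl
  · rfl
  simp only [Efun, psid, ud', map_sub, map_mul, Complex.conj_ofReal]
  field_simp
  simp only [Pi.mul_apply, Complex.ofReal_mul]
  ring

def Fc (L α : ℝ) (K : ℝ → ℝ → ℝ) (ψ : ℝ → ℂ) : ℝ → ℂ := fun x =>
  ∫ y in (0:ℝ)..L, (Complex.ofReal (K x y * Real.exp (α * y))) * ψ y

def Gfun (L α : ℝ) (u : ℝ → ℝ) (ψ : ℝ → ℂ) (μ : ℂ) : ℝ → ℂ := fun x =>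
  Lpsi L α ψ x * (starRingEnd ℂ) (ψ x)
    - (Lu' L α u x : ℂ) * (ψ x * (starRingEnd ℂ) (ψ x)) / (u x : ℂ)
    - μ * (Real.exp (α * x) : ℂ) * (ψ x * (starRingEnd ℂ) (ψ x))

def P1 (α : ℝ) (ψ : ℝ → ℂ) : ℝ → ℝ := fun x => Real.exp (α * x) * Complex.normSq (ψ x)

def P2 (L α : ℝ) (u : ℝ → ℝ) (ψ : ℝ → ℂ) : ℝ → ℝ := fun x =>
  Real.exp (α * x) *
    Complex.normSq ((u x : ℂ) * psid L ψ x - (ud' L u x : ℂ) * ψ x) / (u x) ^ 2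

theorem Edecomp (μ : ℂ) (x : ℝ) :
    Efun L α u ψ x = Gfun L α u ψ μ x + μ * ((P1 α ψ x : ℝ) : ℂ) + ((P2 L α u ψ x : ℝ) : ℂ) := by
  simp only [Efun, Gfun, P1, P2, Complex.ofReal_mul, Complex.ofReal_div, Complex.ofReal_pow,
    ← Complex.mul_conj]
  ring

theorem eqOnIoo (r τ : ℝ) (μ : ℂ) (m : ℝ → ℝ) (K : ℝ → ℝ → ℝ)
    (hchar : CharEq L α r m K u μ τ ψ)
    (husteady : ∀ x ∈ Set.Ioo 0 L,
      derivWithin (fun t => Real.exp (α * t) * derivWithin u (Set.Icc 0 L) t)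
          (Set.Icc 0 L) x
        + r * Real.exp (α * x) * u x *
          (m x - ∫ y in (0:ℝ)..L, K x y * Real.exp (α * y) * u y) = 0)
    (x : ℝ) (hx : x ∈ Ioo 0 L) (hux : u x ≠ 0) :
    Gfun L α u ψ μ x =
      (r : ℂ) * Complex.exp (-μ * (τ : ℂ)) * (Real.exp (α * x) : ℂ) * (u x : ℂ) *
        Fc L α K ψ x * (starRingEnd ℂ) (ψ x) := by
  have huxc : (u x : ℂ) ≠ 0 := by exact_mod_cast hux
  have h1 := hchar x hx
  have h2 := husteady x hx
  have h2c : ((derivWithin (fun t => Real.exp (α * t) * derivWithin u (Set.Icc 0 L) t)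
      (Set.Icc 0 L) x : ℝ) : ℂ)
      + (r : ℂ) * (Real.exp (α * x) : ℂ) * (u x : ℂ) *
        ((m x : ℂ) - ((∫ y in (0:ℝ)..L, K x y * Real.exp (α * y) * u y : ℝ) : ℂ)) = 0 := by
    exact_mod_cast congrArg Complex.ofReal h2
  simp only [Gfun, Lpsi, Lu', Fc]
  push_cast at h1 h2c ⊢
  field_simp
  push_cast
  simp only [neg_mul] at h1 ⊢
  linear_combination ((starRingEnd ℂ) (ψ x) * (u x : ℂ)) * h1
    - (ψ x * (starRingEnd ℂ) (ψ x)) * h2c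

section cont
variable (hL : 0 < L) (hu : ContDiffOn ℝ 2 u (Icc 0 L)) (hψ : ContDiffOn ℝ 2 ψ (Icc 0 L))
  (hune : ∀ x ∈ Icc 0 L, u x ≠ 0)

include hL hψ in
theorem cont_psid : ContinuousOn (psid L ψ) (Icc 0 L) :=
  ((hψ.derivWithin (uniqueDiffOn_Icc hL) (m := 1) (by norm_num)).continuousOn)

include hL hu in
theorem cont_ud : ContinuousOn (ud' L u) (Icc 0 L) :=
  ((hu.derivWithin (uniqueDiffOn_Icc hL) (m := 1) (by norm_num)).continuousOn)

theorem cont_expC : Continuous (fun t : ℝ => ((Real.exp (α * t) : ℝ) : ℂ)) :=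
  Complex.continuous_ofReal.comp (Real.continuous_exp.comp (continuous_const.mul continuous_id))

include hL hψ in
theorem cont_Lpsi : ContinuousOn (Lpsi L α ψ) (Icc 0 L) := by
  have hud : UniqueDiffOn ℝ (Icc (0:ℝ) L) := uniqueDiffOn_Icc hL
  have hexp : ContDiff ℝ 1 (fun t : ℝ => ((Real.exp (α * t) : ℝ) : ℂ)) :=
    Complex.ofRealCLM.contDiff.comp ((Real.contDiff_exp.of_le le_top).comp
      (contDiff_const.mul contDiff_id))
  exact ((hexp.contDiffOn).mul (hψ.derivWithin hud (by norm_num))).continuousOn_derivWithin hud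
    le_rfl

include hL hu in
theorem cont_Lu : ContinuousOn (Lu' L α u) (Icc 0 L) := by
  have hud : UniqueDiffOn ℝ (Icc (0:ℝ) L) := uniqueDiffOn_Icc hL
  have hexp : ContDiff ℝ 1 (fun t : ℝ => Real.exp (α * t)) :=
    (Real.contDiff_exp.of_le le_top).comp (contDiff_const.mul contDiff_id)
  exact ((hexp.contDiffOn).mul (hu.derivWithin hud (by norm_num))).continuousOn_derivWithin hud
    le_rfl

include hL hu hψ hune in
theorem cont_W : ContinuousOn (Wfun L α u ψ) (Icc 0 L) := by
  have h1 := cont_psid L ψ hL hψ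
  have h2 := cont_ud L u hL hu
  have hψc := hψ.continuousOn
  have huc := hu.continuousOn
  exact (((cont_expC α).continuousOn.mul h1).mul hψc.star).sub
    ((((Complex.continuous_ofReal.comp_continuousOn
        ((Real.continuous_exp.comp (continuous_const.mul continuous_id)).continuousOn.mul h2)).mul
      (hψc.mul hψc.star)).div (Complex.continuous_ofReal.comp_continuousOn huc))
      (fun x hx => by simpa using hune x hx))

include hL hu hψ hune in
theorem cont_G (μ : ℂ) : ContinuousOn (Gfun L α u ψ μ) (Icc 0 L) := by
  have hψc := hψ.continuousOn
  have huc := hu.continuousOn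
  exact (((cont_Lpsi L α ψ hL hψ).mul hψc.star).sub
    (((Complex.continuous_ofReal.comp_continuousOn (cont_Lu L α u hL hu)).mul
      (hψc.mul hψc.star)).div (Complex.continuous_ofReal.comp_continuousOn huc)
      (fun x hx => by simpa using hune x hx))).sub
    (((continuous_const.mul (cont_expC α)).continuousOn).mul (hψc.mul hψc.star))

include hψ in
theorem cont_P1 : ContinuousOn (P1 α ψ) (Icc 0 L) :=
  (Real.continuous_exp.comp (continuous_const.mul continuous_id)).continuousOn.mul
    (Complex.continuous_normSq.comp_continuousOn hψ.continuousOn)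

include hL hu hψ hune in
theorem cont_P2 : ContinuousOn (P2 L α u ψ) (Icc 0 L) := by
  have h1 := cont_psid L ψ hL hψ
  have h2 := cont_ud L u hL hu
  have hψc := hψ.continuousOn
  have huc := hu.continuousOn
  exact (((Real.continuous_exp.comp (continuous_const.mul continuous_id)).continuousOn).mul
    (Complex.continuous_normSq.comp_continuousOn
      (((Complex.continuous_ofReal.comp_continuousOn huc).mul h1).sub
        ((Complex.continuous_ofReal.comp_continuousOn h2).mul hψc)))).div
    (huc.pow 2) (fun x hx => pow_ne_zero 2 (hune x hx))

include hL hu hψ hune in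
theorem cont_E : ContinuousOn (Efun L α u ψ) (Icc 0 L) := by
  have : Efun L α u ψ = fun x => Gfun L α u ψ 0 x + (0:ℂ) * ((P1 α ψ x : ℝ) : ℂ)
      + ((P2 L α u ψ x : ℝ) : ℂ) := funext fun x => Edecomp L α u ψ 0 x
  rw [this]
  exact ((cont_G L α u ψ hL hu hψ hune 0).add
    (continuousOn_const.mul (Complex.continuous_ofReal.comp_continuousOn
      (cont_P1 L α ψ hψ)))).add
    (Complex.continuous_ofReal.comp_continuousOn (cont_P2 L α u ψ hL hu hψ hune))

include hL hu hψ hune in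
theorem integral_identity (μ : ℂ)
    (hu0 : derivWithin u (Icc 0 L) 0 = 0) (huL : derivWithin u (Icc 0 L) L = 0)
    (hψ0 : derivWithin ψ (Icc 0 L) 0 = 0) (hψL : derivWithin ψ (Icc 0 L) L = 0) :
    (∫ x in (0:ℝ)..L, Gfun L α u ψ μ x) + μ * ((∫ x in (0:ℝ)..L, P1 α ψ x : ℝ) : ℂ)
      + ((∫ x in (0:ℝ)..L, P2 L α u ψ x : ℝ) : ℂ) = 0 := by
  have huIcc : uIcc (0:ℝ) L = Icc 0 L := uIcc_of_le hL.le
  have hiG : IntervalIntegrable (Gfun L α u ψ μ) volume 0 L := by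
    apply ContinuousOn.intervalIntegrable; rw [huIcc]; exact cont_G L α u ψ hL hu hψ hune μ
  have hiP1 : IntervalIntegrable (fun x => μ * ((P1 α ψ x : ℝ) : ℂ)) volume 0 L := by
    apply ContinuousOn.intervalIntegrable; rw [huIcc]
    exact continuousOn_const.mul (Complex.continuous_ofReal.comp_continuousOn (cont_P1 L α ψ hψ))
  have hiP2 : IntervalIntegrable (fun x => ((P2 L α u ψ x : ℝ) : ℂ)) volume 0 L := by
    apply ContinuousOn.intervalIntegrable; rw [huIcc]
    exact Complex.continuous_ofReal.comp_continuousOn (cont_P2 L α u ψ hL hu hψ hune)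
  have hiE : IntervalIntegrable (Efun L α u ψ) volume 0 L := by
    apply ContinuousOn.intervalIntegrable; rw [huIcc]; exact cont_E L α u ψ hL hu hψ hune
  have hftc : ∫ x in (0:ℝ)..L, Efun L α u ψ x = Wfun L α u ψ L - Wfun L α u ψ 0 :=
    intervalIntegral.integral_eq_sub_of_hasDeriv_right_of_le hL.le
      (cont_W L α u ψ hL hu hψ hune)
      (fun x hx => (keyDeriv L α u ψ hL hu hψ x hx
        (hune x (Ioo_subset_Icc_self hx))).hasDerivWithinAt) hiE
  have hW0 : Wfun L α u ψ 0 = 0 := by simp [Wfun, hψ0, hu0]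
  have hWL : Wfun L α u ψ L = 0 := by simp [Wfun, hψL, huL]
  have hsplit : ∫ x in (0:ℝ)..L, Efun L α u ψ x =
      (∫ x in (0:ℝ)..L, Gfun L α u ψ μ x) + μ * ((∫ x in (0:ℝ)..L, P1 α ψ x : ℝ) : ℂ)
        + ((∫ x in (0:ℝ)..L, P2 L α u ψ x : ℝ) : ℂ) := by
    have : (fun x => Efun L α u ψ x) = fun x =>
        Gfun L α u ψ μ x + μ * ((P1 α ψ x : ℝ) : ℂ) + ((P2 L α u ψ x : ℝ) : ℂ) :=
      funext fun x => Edecomp L α u ψ μ x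
    rw [this, intervalIntegral.integral_add (hiG.add hiP1) hiP2,
      intervalIntegral.integral_add hiG hiP1, intervalIntegral.integral_const_mul,
      intervalIntegral.integral_ofReal, intervalIntegral.integral_ofReal]
  rw [hftc, hW0, hWL, sub_zero] at hsplit
  exact hsplit.symm

end cont

set_option maxHeartbeats 1000000 in
theorem eigenvalue_bound
    (L α r : ℝ) (hL : 0 < L) (hr : 0 < r)
    (m : ℝ → ℝ) (hm : ContinuousOn m (Set.Icc 0 L))
    (K : ℝ → ℝ → ℝ)
    (hK : MemLp (fun p : ℝ × ℝ => K p.1 p.2) ⊤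
      (volume.restrict (Set.Ioo 0 L ×ˢ Set.Ioo 0 L)))
    (u : ℝ → ℝ)
    (hu : ContDiffOn ℝ 2 u (Set.Icc 0 L))
    (hupos : ∀ x ∈ Set.Icc 0 L, 0 < u x)
    (hu0 : derivWithin u (Set.Icc 0 L) 0 = 0)
    (huL : derivWithin u (Set.Icc 0 L) L = 0)
    (husteady : ∀ x ∈ Set.Ioo 0 L,
      derivWithin (fun t => Real.exp (α * t) * derivWithin u (Set.Icc 0 L) t)
          (Set.Icc 0 L) x
        + r * Real.exp (α * x) * u x *
          (m x - ∫ y in (0:ℝ)..L, K x y * Real.exp (α * y) * u y) = 0)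
    (μ : ℂ) (hμ : 0 ≤ μ.re) (τ : ℝ) (hτ : 0 ≤ τ)
    (ψ : ℝ → ℂ) (hψ : ContDiffOn ℝ 2 ψ (Set.Icc 0 L))
    (hψne : ∃ x ∈ Set.Icc 0 L, ψ x ≠ 0)
    (hψ0 : derivWithin ψ (Set.Icc 0 L) 0 = 0)
    (hψL : derivWithin ψ (Set.Icc 0 L) L = 0)
    (hchar : CharEq L α r m K u μ τ ψ) :
    0 ≤ μ.re / r ∧
    μ.re / r ≤ Real.exp (2 * |α| * L) * L * (sSup ((fun x => |u x|) '' Set.Icc 0 L)) *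
      (eLpNorm (fun p : ℝ × ℝ => K p.1 p.2) ⊤
        (volume.restrict (Set.Ioo 0 L ×ˢ Set.Ioo 0 L))).toReal ∧
    |μ.im| / r ≤ Real.exp (2 * |α| * L) * L * (sSup ((fun x => |u x|) '' Set.Icc 0 L)) *
      (eLpNorm (fun p : ℝ × ℝ => K p.1 p.2) ⊤
        (volume.restrict (Set.Ioo 0 L ×ˢ Set.Ioo 0 L))).toReal ∧
    ‖μ / (r : ℂ)‖ ≤ Real.sqrt 2 *
      (Real.exp (2 * |α| * L) * L * (sSup ((fun x => |u x|) '' Set.Icc 0 L)) *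
      (eLpNorm (fun p : ℝ × ℝ => K p.1 p.2) ⊤
        (volume.restrict (Set.Ioo 0 L ×ˢ Set.Ioo 0 L))).toReal) := by
  have hune : ∀ x ∈ Icc 0 L, u x ≠ 0 := fun x hx => (hupos x hx).ne'
  have huIcc : uIcc (0:ℝ) L = Icc 0 L := uIcc_of_le hL.le
  set c : ℝ := (eLpNorm (fun p : ℝ × ℝ => K p.1 p.2) ⊤
      (volume.restrict (Set.Ioo 0 L ×ˢ Set.Ioo 0 L))).toReal with hc
  set Su : ℝ := sSup ((fun x => |u x|) '' Set.Icc 0 L) with hSu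
  set I : ℝ := ∫ x in (0:ℝ)..L, P1 α ψ x with hI
  set N : ℝ := ∫ x in (0:ℝ)..L, P2 L α u ψ x with hN
  set A : ℝ := ∫ x in (0:ℝ)..L, Real.exp (α * x) * ‖ψ x‖ with hA
  set J : ℝ := ∫ x in (0:ℝ)..L, Real.exp (α * x) with hJdef
  set C : ℝ := Real.exp (2 * |α| * L) * L * Su * c with hC
  -- basic positivity
  have hc0 : 0 ≤ c := ENNReal.toReal_nonneg
  have hSu_mem : ∀ x ∈ Icc (0:ℝ) L, u x ≤ Su := by
    intro x hx
    have : |u x| ∈ (fun x => |u x|) '' Icc 0 L := ⟨x, hx, rfl⟩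
    calc u x ≤ |u x| := le_abs_self _
    _ ≤ Su := le_csSup (isCompact_Icc.bddAbove_image hu.continuousOn.abs) this
  have hSu0 : 0 ≤ Su := le_trans (abs_nonneg _)
    (le_csSup (isCompact_Icc.bddAbove_image hu.continuousOn.abs)
      ⟨0, left_mem_Icc.mpr hL.le, rfl⟩)
  have hC0 : 0 ≤ C := by positivity
  -- continuity-based integrability of |ψ|-type functions
  have hψc : ContinuousOn ψ (Icc 0 L) := hψ.continuousOn
  have hEabs : ContinuousOn (fun x => Real.exp (α * x) * ‖ψ x‖) (Icc 0 L) :=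
    (Real.continuous_exp.comp (continuous_const.mul continuous_id)).continuousOn.mul
      (continuous_norm.comp_continuousOn hψc)
  have hiAbs : IntervalIntegrable (fun x => Real.exp (α * x) * ‖ψ x‖) volume 0 L :=
    by apply ContinuousOn.intervalIntegrable; rw [huIcc]; exact hEabs
  have hiP1 : IntervalIntegrable (P1 α ψ) volume 0 L := by
    apply ContinuousOn.intervalIntegrable; rw [huIcc]; exact cont_P1 L α ψ hψ
  have hA0 : 0 ≤ A := intervalIntegral.integral_nonneg hL.le
    (fun x hx => mul_nonneg (Real.exp_pos _).le (norm_nonneg _))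
  have hJ0 : 0 ≤ J := intervalIntegral.integral_nonneg hL.le
    (fun x hx => (Real.exp_pos _).le)
  have hN0 : 0 ≤ N := intervalIntegral.integral_nonneg hL.le
    (fun x hx => by
      have := hune x hx
      have h1 : (0:ℝ) < Real.exp (α * x) := Real.exp_pos _
      have h2 : (0:ℝ) ≤ Complex.normSq ((u x : ℂ) * psid L ψ x - (ud' L u x : ℂ) * ψ x) :=
        Complex.normSq_nonneg _
      have h3 : (0:ℝ) < (u x)^2 := by positivity
      exact div_nonneg (mul_nonneg h1.le h2) h3.le)
  -- positivity of I
  have hIpos : 0 < I := by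
    obtain ⟨x₀, hx₀, hne⟩ := hψne
    -- find an interior point where ψ ≠ 0
    have hx1 : ∃ x₁ ∈ Ioo (0:ℝ) L, ψ x₁ ≠ 0 := by
      have hclo : x₀ ∈ closure (Ioo 0 L) := by rw [closure_Ioo hL.ne]; exact hx₀
      have hnb : (nhdsWithin x₀ (Ioo 0 L)).NeBot := mem_closure_iff_nhdsWithin_neBot.mp hclo
      have hct : ContinuousWithinAt ψ (Icc 0 L) x₀ := hψc x₀ hx₀
      have hev0 : ∀ᶠ z in nhds (ψ x₀), z ≠ 0 := isOpen_ne.eventually_mem hne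
      have hev : ∀ᶠ y in nhdsWithin x₀ (Icc 0 L), ψ y ≠ 0 := hct.eventually hev0
      have hev' : ∀ᶠ y in nhdsWithin x₀ (Ioo 0 L), ψ y ≠ 0 :=
        hev.filter_mono (nhdsWithin_mono _ Ioo_subset_Icc_self)
      obtain ⟨x₁, h1, h2⟩ := (hev'.and eventually_mem_nhdsWithin).exists
      exact ⟨x₁, h2, h1⟩
    obtain ⟨x₁, hx₁, hne₁⟩ := hx1
    have hct : ContinuousAt ψ x₁ := hψc.continuousAt (Icc_mem_nhds hx₁.1 hx₁.2)
    obtain ⟨ε, hε, hball⟩ := Metric.eventually_nhds_iff.mp (hct.eventually_ne hne₁)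
    set δ : ℝ := min ε (min x₁ (L - x₁)) with hδ
    have hδpos : 0 < δ := lt_min hε (lt_min hx₁.1 (by linarith [hx₁.2]))
    have hsub : Ioo (x₁ - δ/2) (x₁ + δ/2) ⊆ Function.support (P1 α ψ) ∩ Ioo 0 L := by
      intro y hy
      have hd : dist y x₁ < ε := by
        rw [Real.dist_eq, abs_lt]
        have h1 : δ ≤ ε := min_le_left _ _
        constructor <;> [linarith [hy.1]; linarith [hy.2]]
      have hψy : ψ y ≠ 0 := hball hd
      have hyIoo : y ∈ Ioo (0:ℝ) L := by
        have h2 : δ ≤ x₁ := le_trans (min_le_right _ _) (min_le_left _ _)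
        have h3 : δ ≤ L - x₁ := le_trans (min_le_right _ _) (min_le_right _ _)
        constructor <;> [linarith [hy.1]; linarith [hy.2]]
      refine ⟨Function.mem_support.mpr ?_, hyIoo⟩
      have : 0 < Complex.normSq (ψ y) := Complex.normSq_pos.mpr hψy
      have : 0 < P1 α ψ y := mul_pos (Real.exp_pos _) this
      exact this.ne'
    have hint : IntegrableOn (P1 α ψ) (Ioo 0 L) volume :=
      ((cont_P1 L α ψ hψ).integrableOn_compact isCompact_Icc).mono_set Ioo_subset_Icc_self
    have h0 : 0 ≤ᵐ[volume.restrict (Ioo 0 L)] P1 α ψ :=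
      Filter.Eventually.of_forall (fun x => mul_nonneg (Real.exp_pos _).le (Complex.normSq_nonneg _))
    rw [hI, intervalIntegral.integral_of_le hL.le, integral_Ioc_eq_integral_Ioo]
    rw [setIntegral_pos_iff_support_of_nonneg_ae h0 hint]
    calc (0:ENNReal) < volume (Ioo (x₁ - δ/2) (x₁ + δ/2)) := by
          rw [Real.volume_Ioo]
          apply ENNReal.ofReal_pos.mpr
          linarith
    _ ≤ volume (Function.support (P1 α ψ) ∩ Ioo 0 L) := measure_mono hsub
  -- a.e. bound on K
  have haeK : ∀ᵐ x ∂(volume.restrict (Ioo 0 L)),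
      ∀ᵐ y ∂(volume.restrict (Ioo 0 L)), |K x y| ≤ c := by
    have htop : eLpNormEssSup (fun p : ℝ × ℝ => K p.1 p.2)
        (volume.restrict (Set.Ioo 0 L ×ˢ Set.Ioo 0 L)) ≠ ⊤ := by
      rw [← eLpNorm_exponent_top]; exact hK.2.ne
    have hae := ae_le_eLpNormEssSup (f := fun p : ℝ × ℝ => K p.1 p.2)
      (μ := volume.restrict (Set.Ioo 0 L ×ˢ Set.Ioo 0 L))
    have hae' : ∀ᵐ p ∂(volume.restrict (Set.Ioo 0 L ×ˢ Set.Ioo 0 L)),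
        |K p.1 p.2| ≤ c := by
      filter_upwards [hae] with p hp
      have := ENNReal.toReal_mono htop hp
      simpa [hc, ← eLpNorm_exponent_top] using this
    rw [Measure.volume_eq_prod, ← Measure.prod_restrict] at hae'
    exact Measure.ae_ae_of_ae_prod hae'
  -- bound on Fc
  have hFc : ∀ᵐ x ∂(volume.restrict (Ioo 0 L)), ‖Fc L α K ψ x‖ ≤ c * A := by
    filter_upwards [haeK] with x hx
    have h1 : ‖Fc L α K ψ x‖ ≤
        ∫ y in (0:ℝ)..L, ‖(Complex.ofReal (K x y * Real.exp (α * y))) * ψ y‖ := by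
      exact intervalIntegral.norm_integral_le_integral_norm hL.le
    have h2 : (∫ y in (0:ℝ)..L, ‖(Complex.ofReal (K x y * Real.exp (α * y))) * ψ y‖)
        ≤ c * A := by
      rw [intervalIntegral.integral_of_le hL.le, integral_Ioc_eq_integral_Ioo]
      have hconv : c * A = ∫ y in Ioo (0:ℝ) L, c * (Real.exp (α * y) * ‖ψ y‖) := by
        rw [integral_const_mul, hA, intervalIntegral.integral_of_le hL.le,
          integral_Ioc_eq_integral_Ioo]
      rw [hconv]
      apply integral_mono_of_nonneg
      · exact Filter.Eventually.of_forall (fun y => norm_nonneg _)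
      · exact Integrable.const_mul
          ((hEabs.integrableOn_compact isCompact_Icc).mono_set Ioo_subset_Icc_self) c
      · filter_upwards [hx, ae_restrict_mem measurableSet_Ioo] with y hy hy'
        have : ‖(Complex.ofReal (K x y * Real.exp (α * y))) * ψ y‖
            = |K x y| * Real.exp (α * y) * ‖ψ y‖ := by
          rw [norm_mul, Complex.norm_real, Real.norm_eq_abs, abs_mul,
            abs_of_pos (Real.exp_pos (α * y))]
        rw [this]
        calc |K x y| * Real.exp (α * y) * ‖ψ y‖
            ≤ c * Real.exp (α * y) * ‖ψ y‖ := by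
              apply mul_le_mul_of_nonneg_right _ (norm_nonneg _)
              exact mul_le_mul_of_nonneg_right hy (Real.exp_pos _).le
        _ = c * (Real.exp (α * y) * ‖ψ y‖) := mul_assoc _ _ _
    linarith
  -- bound on ∫ G
  have hGbound : ‖∫ x in (0:ℝ)..L, Gfun L α u ψ μ x‖ ≤ r * c * Su * (A * A) := by
    have hbase : IntegrableOn (fun x => Real.exp (α * x) * ‖ψ x‖) (Ioo 0 L) volume :=
      (hEabs.integrableOn_compact isCompact_Icc).mono_set Ioo_subset_Icc_self
    have hexpmt : ‖Complex.exp (-μ * (τ:ℂ))‖ ≤ 1 := by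
      rw [Complex.norm_exp, Real.exp_le_one_iff]
      have : (-μ * (τ:ℂ)).re = -(μ.re * τ) := by
        simp [Complex.mul_re]
      rw [this]
      have := mul_nonneg hμ hτ
      linarith
    have hbound : ∀ᵐ x ∂(volume.restrict (Ioo 0 L)),
        ‖Gfun L α u ψ μ x‖ ≤ r * ((c * A) * Su) * (Real.exp (α * x) * ‖ψ x‖) := by
      filter_upwards [hFc, ae_restrict_mem measurableSet_Ioo] with x hfx hx
      rw [eqOnIoo L α u ψ r τ μ m K hchar husteady x hx (hune x (Ioo_subset_Icc_self hx))]
      have hupos' := hupos x (Ioo_subset_Icc_self hx)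
      have h0 : ‖(r : ℂ) * Complex.exp (-μ * (τ:ℂ)) * (Real.exp (α * x) : ℂ) * (u x : ℂ) *
          Fc L α K ψ x * (starRingEnd ℂ) (ψ x)‖
          = r * ‖Complex.exp (-μ * (τ:ℂ))‖ * Real.exp (α * x) * u x *
            ‖Fc L α K ψ x‖ * ‖ψ x‖ := by
        simp only [norm_mul, Complex.norm_real, Real.norm_eq_abs, Complex.norm_conj]
        rw [abs_of_pos hr, abs_of_pos (Real.exp_pos _), abs_of_pos hupos']
      rw [h0]
      have hAb := norm_nonneg (ψ x)
      have hexp0 := (Real.exp_pos (α * x)).le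
      calc r * ‖Complex.exp (-μ * (τ:ℂ))‖ * Real.exp (α * x) * u x *
            ‖Fc L α K ψ x‖ * ‖ψ x‖
          ≤ r * 1 * Real.exp (α * x) * Su * (c * A) * ‖ψ x‖ := by
            gcongr <;> first
              | exact hexpmt
              | exact hfx
              | exact hSu_mem x (Ioo_subset_Icc_self hx)
              | exact hupos'.le
              | positivity
      _ = r * ((c * A) * Su) * (Real.exp (α * x) * ‖ψ x‖) := by ring
    have hD : Integrable (fun x => r * ((c * A) * Su) * (Real.exp (α * x) * ‖ψ x‖))
        (volume.restrict (Ioo 0 L)) := hbase.const_mul _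
    rw [intervalIntegral.integral_of_le hL.le,
      integral_Ioc_eq_integral_Ioo]
    calc ‖∫ x in Ioo (0:ℝ) L, Gfun L α u ψ μ x‖
        ≤ ∫ x in Ioo (0:ℝ) L, r * ((c * A) * Su) * (Real.exp (α * x) * ‖ψ x‖) :=
          norm_integral_le_of_norm_le hD hbound
    _ = r * ((c * A) * Su) * ∫ x in Ioo (0:ℝ) L, Real.exp (α * x) * ‖ψ x‖ :=
          integral_const_mul _ _
    _ = r * ((c * A) * Su) * A := by
          rw [hA, intervalIntegral.integral_of_le hL.le, integral_Ioc_eq_integral_Ioo]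
    _ = r * c * Su * (A * A) := by ring
  -- integral identity, real and imaginary parts
  have hId := integral_identity L α u ψ hL hu hψ hune μ hu0 huL hψ0 hψL
  rw [← hI, ← hN] at hId
  have hre : μ.re * I + N = -(∫ x in (0:ℝ)..L, Gfun L α u ψ μ x).re := by
    have h := congrArg Complex.re hId
    simp only [Complex.add_re, Complex.mul_re, Complex.ofReal_re, Complex.ofReal_im,
      Complex.zero_re, mul_zero, sub_zero] at h
    linarith
  have him : μ.im * I = -(∫ x in (0:ℝ)..L, Gfun L α u ψ μ x).im := by
    have h := congrArg Complex.im hId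
    simp only [Complex.add_im, Complex.mul_im, Complex.ofReal_re, Complex.ofReal_im,
      Complex.zero_im, mul_zero, add_zero, zero_add] at h
    linarith
  -- Young / Cauchy-Schwarz: A^2 ≤ J * I
  have hA2 : A * A ≤ J * I := by
    have hiJ : IntervalIntegrable (fun x => Real.exp (α * x)) volume 0 L := by
      apply ContinuousOn.intervalIntegrable; rw [huIcc]
      exact (Real.continuous_exp.comp (continuous_const.mul continuous_id)).continuousOn
    have hyoung : ∀ t : ℝ, 0 < t → 4 * t * A ≤ 4 * t^2 * I + J := by
      intro t ht
      have hpt : ∀ x ∈ Icc (0:ℝ) L,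
          4 * t * (Real.exp (α * x) * ‖ψ x‖)
            ≤ 4 * t^2 * P1 α ψ x + Real.exp (α * x) := by
        intro x hx
        have h1 : P1 α ψ x = Real.exp (α * x) * (‖ψ x‖)^2 := by
          rw [P1, Complex.sq_norm]
        rw [h1]
        nlinarith [mul_nonneg (Real.exp_pos (α * x)).le
          (sq_nonneg (2 * t * ‖ψ x‖ - 1)), Real.exp_pos (α * x)]
      have hmono := intervalIntegral.integral_mono_on hL.le
        (hiAbs.const_mul (4 * t))
        (((hiP1.const_mul (4 * t^2))).add hiJ) hpt
      rw [intervalIntegral.integral_const_mul] at hmono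
      rw [intervalIntegral.integral_add (hiP1.const_mul (4 * t^2)) hiJ,
        intervalIntegral.integral_const_mul] at hmono
      calc 4 * t * A = 4 * t * ∫ x in (0:ℝ)..L, Real.exp (α * x) * ‖ψ x‖ := by
            rw [hA]
      _ ≤ 4 * t^2 * (∫ x in (0:ℝ)..L, P1 α ψ x) + ∫ x in (0:ℝ)..L, Real.exp (α * x) := hmono
      _ = 4 * t^2 * I + J := by rw [← hI, ← hJdef]
    rcases eq_or_lt_of_le hA0 with h|h
    · have : 0 ≤ J * I := mul_nonneg hJ0 hIpos.le
      nlinarith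
    · have hspec := hyoung (A / (2 * I)) (by positivity)
      have hAne : A ≠ 0 := h.ne'
      have hIne : I ≠ 0 := hIpos.ne'
      have hclear : 2 * (A * A / I) ≤ (A * A / I) + J := by
        have e1 : 4 * (A / (2 * I)) * A = 2 * (A * A / I) := by field_simp; ring
        have e2 : 4 * (A / (2 * I))^2 * I = (A * A / I) := by field_simp; ring
        rw [e1, e2] at hspec
        exact hspec
      have h3 : A * A / I ≤ J := by linarith
      calc A * A = (A * A) / I * I := by field_simp
      _ ≤ J * I := mul_le_mul_of_nonneg_right h3 hIpos.le
  -- J ≤ L * exp(|α| L)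
  have hJle : J ≤ L * Real.exp (|α| * L) := by
    have : ∀ x ∈ Icc (0:ℝ) L, Real.exp (α * x) ≤ Real.exp (|α| * L) := by
      intro x hx
      apply Real.exp_le_exp.mpr
      calc α * x ≤ |α * x| := le_abs_self _
      _ = |α| * |x| := abs_mul _ _
      _ ≤ |α| * L := by
          apply mul_le_mul_of_nonneg_left _ (abs_nonneg α)
          rw [abs_of_nonneg hx.1]; exact hx.2
    calc J ≤ ∫ x in (0:ℝ)..L, Real.exp (|α| * L) := by
          apply intervalIntegral.integral_mono_on hL.le _ _ this
          · apply ContinuousOn.intervalIntegrable; rw [huIcc]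
            exact (Real.continuous_exp.comp (continuous_const.mul continuous_id)).continuousOn
          · exact intervalIntegrable_const
    _ = L * Real.exp (|α| * L) := by simp
  -- main chain
  have hmain : ∀ v : ℝ, v * I ≤ ‖∫ x in (0:ℝ)..L, Gfun L α u ψ μ x‖ →
      v ≤ r * C := by
    intro v hv
    have h1 : v * I ≤ r * c * Su * (J * I) :=
      le_trans hv (le_trans hGbound
        (mul_le_mul_of_nonneg_left hA2 (by positivity : (0:ℝ) ≤ r * c * Su)))
    have h2 : r * c * Su * J ≤ r * C := by
      have : J ≤ L * Real.exp (2 * |α| * L) := by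
        apply le_trans hJle
        apply mul_le_mul_of_nonneg_left _ hL.le
        apply Real.exp_le_exp.mpr
        nlinarith [abs_nonneg α]
      calc r * c * Su * J ≤ r * c * Su * (L * Real.exp (2 * |α| * L)) := by
            apply mul_le_mul_of_nonneg_left this (by positivity)
      _ = r * C := by rw [hC]; ring
    rw [← mul_assoc] at h1
    exact le_trans (le_of_mul_le_mul_right h1 hIpos) h2
  have hre_bound : μ.re ≤ r * C := by
    apply hmain
    calc μ.re * I ≤ μ.re * I + N := by linarith
    _ = -(∫ x in (0:ℝ)..L, Gfun L α u ψ μ x).re := hre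
    _ ≤ |(∫ x in (0:ℝ)..L, Gfun L α u ψ μ x).re| := neg_le_abs _
    _ ≤ ‖(_ : ℂ)‖ := Complex.abs_re_le_norm _
  have him_bound : |μ.im| ≤ r * C := by
    apply hmain
    calc |μ.im| * I = |μ.im * I| := by rw [abs_mul, abs_of_pos hIpos]
    _ = |(∫ x in (0:ℝ)..L, Gfun L α u ψ μ x).im| := by rw [him, abs_neg]
    _ ≤ ‖(_ : ℂ)‖ := Complex.abs_im_le_norm _
  refine ⟨div_nonneg hμ hr.le, ?_, ?_, ?_⟩
  · rw [div_le_iff₀ hr]; calc μ.re ≤ r * C := hre_bound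
    _ = C * r := mul_comm _ _
  · rw [div_le_iff₀ hr]; calc |μ.im| ≤ r * C := him_bound
    _ = C * r := mul_comm _ _
  · have habs : ‖μ‖ ≤ Real.sqrt 2 * (r * C) := by
      have hsq : Complex.normSq μ ≤ 2 * (r * C)^2 := by
        rw [Complex.normSq_apply]
        have h1 : μ.re^2 ≤ (r*C)^2 := pow_le_pow_left₀ hμ hre_bound 2
        have h2 : μ.im^2 ≤ (r*C)^2 := by
          rw [← sq_abs μ.im]; exact pow_le_pow_left₀ (abs_nonneg _) him_bound 2
        have e1 : μ.re * μ.re = μ.re^2 := (sq μ.re).symm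
        have e2 : μ.im * μ.im = μ.im^2 := (sq μ.im).symm
        linarith
      calc ‖μ‖ = Real.sqrt (Complex.normSq μ) := Complex.norm_def μ
      _ ≤ Real.sqrt (2 * (r * C)^2) := Real.sqrt_le_sqrt hsq
      _ = Real.sqrt 2 * (r * C) := by
          rw [Real.sqrt_mul (by norm_num : (0:ℝ) ≤ 2), Real.sqrt_sq (by positivity)]
    rw [norm_div, Complex.norm_real, Real.norm_eq_abs, abs_of_pos hr, div_le_iff₀ hr]
    calc ‖μ‖ ≤ Real.sqrt 2 * (r * C) := habs
    _ = Real.sqrt 2 * C * r := by ring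

end
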